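/- For every integer n > 1, C_1(n) := Σ_{k=1}^{n} (−1)^(k−1) · [2n, n−k] · k equals (−1)^n · (2n+1)/(8(n−1)) + [2n, n] · (2n−1)/(8(n−1)). -/
import Mathlib


open Finset

/-- Rising factorial `(x)_n = x(x+1)⋯(x+n-1)`. -/
noncomputable def rfact (x : ℝ) : ℕ → ℝ
  | 0 => 1
  | n + 1 => rfact x n * (x + n)

/-- The bracket coefficient `[n, k] = (1/2)_n / ((1/2)_k (1/2)_{n-k})`. -/
noncomputable def brkt (n k : ℕ) : ℝ :=
  rfact (1 / 2) n / (rfact (1 / 2) k * rfact (1 / 2) (n - k))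

lemma rfact_half_pos (m : ℕ) : 0 < rfact (1/2) m := by
  induction m with
  | zero => norm_num [rfact]
  | succ k ih =>
    rw [show rfact (1/2) (k+1) = rfact (1/2) k * (1/2 + k) from rfl]
    exact mul_pos ih (by positivity)

lemma brkt_zero (N : ℕ) : brkt N 0 = 1 := by
  unfold brkt
  rw [show rfact (1/2) 0 = 1 from rfl, Nat.sub_zero, one_mul]
  exact div_self (rfact_half_pos N).ne'

lemma brkt_pred (N j : ℕ) (h1 : 1 ≤ j) (h2 : j ≤ N) :
    brkt N (j-1) = brkt N j * (((j:ℝ) - 1/2) / ((N:ℝ) - (j:ℝ) + 1/2)) := by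
  obtain ⟨i, rfl⟩ : ∃ i, j = i + 1 := ⟨j-1, (Nat.succ_pred_eq_of_pos h1).symm⟩
  have hN : N - i = (N - (i+1)) + 1 := by omega
  have hcast : ((N - (i+1) : ℕ) : ℝ) = (N:ℝ) - (i:ℝ) - 1 := by
    have := Nat.cast_sub h2 (R := ℝ)
    push_cast at this ⊢
    linarith
  have hNi : (1:ℝ) ≤ (N:ℝ) - (i:ℝ) := by
    have : ((i+1:ℕ):ℝ) ≤ (N:ℝ) := Nat.cast_le.mpr h2
    push_cast at this; linarith
  unfold brkt
  rw [Nat.add_sub_cancel, hN]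
  rw [show rfact (1/2) (i+1) = rfact (1/2) i * (1/2 + i) from rfl,
      show rfact (1/2) ((N-(i+1))+1) = rfact (1/2) (N-(i+1)) * (1/2 + ((N-(i+1):ℕ):ℝ)) from rfl]
  rw [hcast]
  have hA := rfact_half_pos i
  have hB := rfact_half_pos (N-(i+1))
  have h0 : (0:ℝ) ≤ (i:ℝ) := Nat.cast_nonneg i
  have d1 : (1/2 + (i:ℝ)) ≠ 0 := by linarith
  have d2 : (1/2 + ((N:ℝ) - i - 1)) ≠ 0 := by linarith
  have d3 : ((N:ℝ) - (↑(i+1):ℝ) + 1/2) ≠ 0 := by push_cast; linarith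
  rw [div_mul_div_comm, div_eq_div_iff (by positivity) (by positivity)]
  push_cast
  ring

theorem C_one_eval (n : ℕ) (hn : 1 < n) :
    ∑ k ∈ Finset.Icc 1 n, (-1 : ℝ) ^ (k - 1) * brkt (2 * n) (n - k) * (k : ℝ) =
      (-1 : ℝ) ^ n * (2 * (n : ℝ) + 1) / (8 * ((n : ℝ) - 1)) +
        brkt (2 * n) n * (2 * (n : ℝ) - 1) / (8 * ((n : ℝ) - 1)) := by
  have hn1 : (1:ℝ) < (n:ℝ) := by exact_mod_cast hn
  set r : ℕ → ℝ := fun k => (k:ℝ)^2/(2*((n:ℝ)-1)) + (k:ℝ)/2 - (2*(n:ℝ)-1)/(8*((n:ℝ)-1))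
    with hr
  set G : ℕ → ℝ := fun k => (-1:ℝ)^k * brkt (2*n) (n-k) * r k with hG
  have key : ∀ k ∈ Finset.Icc 1 (n-1),
      (-1:ℝ)^(k-1) * brkt (2*n) (n-k) * (k:ℝ) = G (k+1) - G k := by
    intro k hk
    simp only [Finset.mem_Icc] at hk
    obtain ⟨j, rfl⟩ : ∃ j, k = j + 1 := ⟨k-1, by omega⟩
    have h1 : 1 ≤ n - (j+1) := by omega
    have h2 : n - (j+1) ≤ 2*n := by omega
    have hsub : n - (j+1+1) = (n - (j+1)) - 1 := by omega
    have hcast : ((n - (j+1) : ℕ) : ℝ) = (n:ℝ) - (j:ℝ) - 1 := by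
      have : ((j:ℝ)+1+1) ≤ (n:ℝ) := by exact_mod_cast Nat.cast_le.mpr (show j+2 ≤ n by omega)
      have h := Nat.cast_sub (show j+1 ≤ n by omega) (R := ℝ)
      push_cast at h ⊢; linarith
    have hbp := brkt_pred (2*n) (n-(j+1)) h1 h2
    rw [hcast] at hbp
    simp only [hG, hr, hsub, hbp]
    have hjn : ((j:ℝ)) + 1 + 1 ≤ (n:ℝ) := by exact_mod_cast Nat.cast_le.mpr (show j+2 ≤ n by omega)
    have d1 : (n:ℝ) - 1 ≠ 0 := by linarith
    have d2 : (2*(n:ℝ):ℝ) - ((n:ℝ) - (j:ℝ) - 1) + 1/2 ≠ 0 := by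
      have : (0:ℝ) ≤ (j:ℝ) := Nat.cast_nonneg j
      push_cast; nlinarith
    rw [Nat.add_sub_cancel]
    have H : ((j:ℝ)+1) =
        (((n:ℝ) - (j:ℝ) - 1 - 1/2) / ((↑(2*n):ℝ) - ((n:ℝ) - (j:ℝ) - 1) + 1/2)) * r (j+2)
          + r (j+1) := by
      simp only [hr]
      push_cast
      rw [div_mul_eq_mul_div, div_add' _ _ _ (by push_cast at d2 ⊢; linarith),
        eq_div_iff (by push_cast at d2 ⊢; linarith)]
      field_simp
      ring
    simp only [hr] at H ⊢
    push_cast at H ⊢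
    linear_combination ((-1:ℝ)^j * brkt (2*n) (n - (j+1))) * H
  have hsplit : ∑ k ∈ Finset.Icc 1 n, (-1 : ℝ) ^ (k - 1) * brkt (2 * n) (n - k) * (k : ℝ)
      = (∑ k ∈ Finset.Icc 1 (n-1), (-1 : ℝ) ^ (k - 1) * brkt (2 * n) (n - k) * (k : ℝ))
        + (-1:ℝ)^(n-1) * brkt (2*n) (n-n) * (n:ℝ) := by
    have h := Finset.sum_Icc_succ_top (a := 1) (b := n-1)
      (f := fun k => (-1 : ℝ) ^ (k - 1) * brkt (2 * n) (n - k) * (k : ℝ)) (by omega)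
    rw [show n - 1 + 1 = n by omega] at h
    exact h
  rw [hsplit, Finset.sum_congr rfl key]
  have htel : ∀ m : ℕ, ∑ k ∈ Finset.Icc 1 m, (G (k+1) - G k) = G (m+1) - G 1 := by
    intro m
    induction m with
    | zero => simp
    | succ p ih =>
      rw [Finset.sum_Icc_succ_top (by omega), ih]
      ring
  rw [htel (n-1), show n - 1 + 1 = n by omega]
  have hGn : G n = (-1:ℝ)^n * r n := by
    simp [hG, Nat.sub_self, brkt_zero]
  have hbp1 := brkt_pred (2*n) n (by omega) (by omega)
  have hG1 : G 1 = -(brkt (2*n) n * (((n:ℝ) - 1/2) / (2*(n:ℝ) - (n:ℝ) + 1/2)) * r 1) := by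
    simp only [hG, pow_one]
    rw [hbp1]
    push_cast
    ring
  rw [hGn, hG1, Nat.sub_self, brkt_zero]
  have hpow : (-1:ℝ)^(n-1) = -(-1:ℝ)^n := by
    rw [show n = (n-1)+1 by omega, pow_succ, Nat.add_sub_cancel]
    ring
  rw [hpow]
  have d1 : (n:ℝ) - 1 ≠ 0 := by linarith
  have d2 : (n:ℝ) + 1/2 ≠ 0 := by positivity
  have h1 : r n - (n:ℝ) = (2*(n:ℝ)+1)/(8*((n:ℝ)-1)) := by
    simp only [hr]; field_simp; ring
  have h2 : (((n:ℝ) - 1/2) / (2*(n:ℝ) - (n:ℝ) + 1/2)) * r 1 = (2*(n:ℝ)-1)/(8*((n:ℝ)-1)) := by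
    simp only [hr]
    rw [show 2*(n:ℝ) - (n:ℝ) + 1/2 = (n:ℝ) + 1/2 by ring]
    push_cast
    field_simp
    ring
  linear_combination ((-1:ℝ)^n) * h1 + brkt (2*n) n * h2
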